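/- Let ℓ, m, γ, ε, σ̄₀, σ̄₁ ≥ 0 and h > 0, and define α(s) = 2s + 2·ε·s·ℓ + ε²·ℓ·m for s ≥ 0. Let f, g : ℝⁿ → ℝⁿ each be Lipschitz with constant ℓ with respect to the supremum norm. Let μ₁, μ₀ : ℝⁿ → ℝⁿ satisfy ‖μ₁(z) − g(z)‖ ≤ γ·σ̄₁ and ‖μ₀(z) − g(z)‖ ≤ γ·σ̄₀ for all z ∈ ℝⁿ. Suppose 4·γ·σ̄₁·ε ≤ h and let x, y ∈ ℝⁿ with ‖x − y‖ ≤ h. Then every point x̌ ∈ ℝⁿ with ‖x̌ − (x + ε·(f(x) + μ₁(x)))‖ ≤ γ·σ̄₁·ε + α(h) + 2h satisfies ‖x̌ − (y + ε·(f(y) + μ₀(y)))‖ ≤ γ·σ̄₀·ε + α(2h) + 2h; that is, closedBall(x + ε(f(x)+μ₁(x)), γσ̄₁ε + α(h) + h) + h·B̄ is contained in closedBall(y + ε(f(y)+μ₀(y)), γσ̄₀ε + α(2h) + 2h). -/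

import Mathlib

/-- Claim 3 in the proof of Proposition 1 of the paper: with dilation term
`α(s) = 2s + 2εsℓ + ε²ℓm` and `4γσ̄₁ε ≤ h`, the `h`-dilated one-step forward ball at
resolution `h` around `x` is contained in the one-step forward ball at the coarser
resolution `2h` around a nearby state `y`. -/
theorem forward_ball_refinement
    (n : ℕ) (ℓ m γ ε σbar₀ σbar₁ h : ℝ)
    (hℓ : 0 ≤ ℓ) (hm : 0 ≤ m) (hγ : 0 ≤ γ) (hε : 0 ≤ ε)
    (hσ₀ : 0 ≤ σbar₀) (hσ₁ : 0 ≤ σbar₁) (hh : 0 < h)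
    (f g μ₁ μ₀ : (Fin n → ℝ) → (Fin n → ℝ))
    (hfLip : ∀ x y : Fin n → ℝ, ‖f x - f y‖ ≤ ℓ * ‖x - y‖)
    (hgLip : ∀ x y : Fin n → ℝ, ‖g x - g y‖ ≤ ℓ * ‖x - y‖)
    (hμ₁ : ∀ z : Fin n → ℝ, ‖μ₁ z - g z‖ ≤ γ * σbar₁)
    (hμ₀ : ∀ z : Fin n → ℝ, ‖μ₀ z - g z‖ ≤ γ * σbar₀)
    (hsmall : 4 * γ * σbar₁ * ε ≤ h)
    (x y : Fin n → ℝ) (hxy : ‖x - y‖ ≤ h) :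
    ∀ xc : Fin n → ℝ,
      ‖xc - (x + ε • (f x + μ₁ x))‖ ≤
          γ * σbar₁ * ε + (2 * h + 2 * ε * h * ℓ + ε ^ 2 * ℓ * m) + 2 * h →
      ‖xc - (y + ε • (f y + μ₀ y))‖ ≤
          γ * σbar₀ * ε + (2 * (2 * h) + 2 * ε * (2 * h) * ℓ + ε ^ 2 * ℓ * m) + 2 * h := by
  intro xc hxc
  have hμdiff : ‖μ₁ x - μ₀ y‖ ≤ γ * σbar₁ + ℓ * h + γ * σbar₀ := by
    have h1 : μ₁ x - μ₀ y = (μ₁ x - g x) + (g x - g y) + (g y - μ₀ y) := by abel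
    rw [h1]
    have hg' : ‖g x - g y‖ ≤ ℓ * h := (hgLip x y).trans (by nlinarith)
    calc ‖(μ₁ x - g x) + (g x - g y) + (g y - μ₀ y)‖
        ≤ ‖(μ₁ x - g x) + (g x - g y)‖ + ‖g y - μ₀ y‖ := norm_add_le _ _
      _ ≤ (‖μ₁ x - g x‖ + ‖g x - g y‖) + ‖g y - μ₀ y‖ :=
          add_le_add_left (norm_add_le _ _) _
      _ ≤ γ * σbar₁ + ℓ * h + γ * σbar₀ := by
          rw [norm_sub_rev (g y)]
          exact add_le_add (add_le_add (hμ₁ x) hg') (hμ₀ y)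
  have hAB : ‖(x + ε • (f x + μ₁ x)) - (y + ε • (f y + μ₀ y))‖ ≤
      h + ε * (ℓ * h) + ε * (γ * σbar₁ + ℓ * h + γ * σbar₀) := by
    have h1 : (x + ε • (f x + μ₁ x)) - (y + ε • (f y + μ₀ y))
        = (x - y) + ε • (f x - f y) + ε • (μ₁ x - μ₀ y) := by
      simp only [smul_add, smul_sub]; abel
    rw [h1]
    have hf' : ‖f x - f y‖ ≤ ℓ * h := (hfLip x y).trans (by nlinarith)
    calc ‖(x - y) + ε • (f x - f y) + ε • (μ₁ x - μ₀ y)‖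
        ≤ ‖(x - y) + ε • (f x - f y)‖ + ‖ε • (μ₁ x - μ₀ y)‖ := norm_add_le _ _
      _ ≤ (‖x - y‖ + ‖ε • (f x - f y)‖) + ‖ε • (μ₁ x - μ₀ y)‖ :=
          add_le_add_left (norm_add_le _ _) _
      _ ≤ h + ε * (ℓ * h) + ε * (γ * σbar₁ + ℓ * h + γ * σbar₀) := by
          rw [norm_smul, norm_smul, Real.norm_of_nonneg hε]
          exact add_le_add (add_le_add hxy (mul_le_mul_of_nonneg_left hf' hε))
            (mul_le_mul_of_nonneg_left hμdiff hε)
  have htri : ‖xc - (y + ε • (f y + μ₀ y))‖ ≤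
      ‖xc - (x + ε • (f x + μ₁ x))‖ + ‖(x + ε • (f x + μ₁ x)) - (y + ε • (f y + μ₀ y))‖ :=
    norm_sub_le_norm_sub_add_norm_sub _ _ _
  nlinarith [htri, hAB, hxc, mul_nonneg (mul_nonneg hγ hσ₁) hε]
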